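/- In the quantum torus associative algebra generated by invertible U, V with U V = q V U (where U plays the role of q^L and V of e^M), define E_{n,m} := Vⁿ(Uᵐ − U^{−m}). Then [E_{n,m}, E_{l,k}] = (q^{ml}−q^{nk}) V^{n+l}(U^{m+k} − U^{−(m+k)}) − (q^{ml}−q^{−nk}) V^{n+l}(U^{m−k} − U^{−(m−k)}) + (q^{ml}−q^{nk}+q^{−ml}−q^{−nk}) V^{n+l}(U^{−m−k} − U^{−m+k}). -/

import Mathlib

theorem qt_comm {K : Type*} [CommRing K] (q : Kˣ)
    {A : Type*} [Ring A] [Algebra K A] (U V : Aˣ)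
    (hUV : (U : A) * (V : A) = (q : K) • ((V : A) * (U : A))) :
    ∀ a b : ℤ, ((U ^ a : Aˣ) : A) * ((V ^ b : Aˣ) : A)
      = ((q ^ (a * b) : Kˣ) : K) • (((V ^ b : Aˣ) : A) * ((U ^ a : Aˣ) : A)) := by
  have h1 : ∀ a : ℤ, ((U ^ a : Aˣ) : A) * (V : A)
      = ((q ^ a : Kˣ) : K) • ((V : A) * ((U ^ a : Aˣ) : A)) := by
    have hinv : ((U⁻¹ : Aˣ) : A) * (V : A) = ((q⁻¹ : Kˣ) : K) • ((V : A) * ((U⁻¹ : Aˣ) : A)) := by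
      have : (V : A) * ((U⁻¹ : Aˣ) : A) = (q : K) • (((U⁻¹ : Aˣ) : A) * (V : A)) := by
        calc (V : A) * ((U⁻¹ : Aˣ) : A)
            = ((U⁻¹ : Aˣ) : A) * (((U : A) * V) * ((U⁻¹ : Aˣ) : A)) := by
              rw [← mul_assoc, ← mul_assoc, Units.inv_mul, one_mul]
          _ = (q : K) • (((U⁻¹ : Aˣ) : A) * (V : A)) := by
              rw [hUV, smul_mul_assoc, mul_smul_comm, mul_assoc, Units.mul_inv, mul_one]
      rw [this, smul_smul, Units.inv_mul, one_smul]
    intro a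
    induction a using Int.induction_on with
    | zero => simp
    | succ i ih =>
        have hp1 : (U ^ ((i : ℤ) + 1) : Aˣ) = U ^ (i : ℤ) * U := by
          rw [zpow_add_one]
        have hq1 : (q ^ ((i : ℤ) + 1) : Kˣ) = q ^ (i : ℤ) * q := by
          rw [zpow_add_one]
        rw [hp1, hq1, Units.val_mul, Units.val_mul, mul_assoc, hUV, mul_smul_comm,
          ← mul_assoc, ih, smul_mul_assoc, smul_smul, mul_assoc, mul_comm ((q:K))]
    | pred i ih =>
        have hp1 : (U ^ (-(i : ℤ) - 1) : Aˣ) = U ^ (-(i : ℤ)) * U⁻¹ := by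
          rw [zpow_sub_one]
        have hq1 : (q ^ (-(i : ℤ) - 1) : Kˣ) = q ^ (-(i : ℤ)) * q⁻¹ := by
          rw [zpow_sub_one]
        rw [hp1, hq1, Units.val_mul, Units.val_mul, mul_assoc, hinv, mul_smul_comm,
          ← mul_assoc, ih, smul_mul_assoc, smul_smul, mul_assoc, mul_comm (((q⁻¹:Kˣ):K))]
  have h1inv : ∀ a : ℤ, ((U ^ a : Aˣ) : A) * ((V⁻¹ : Aˣ) : A)
      = ((q ^ (-a) : Kˣ) : K) • (((V⁻¹ : Aˣ) : A) * ((U ^ a : Aˣ) : A)) := by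
    intro a
    have hrev : (V : A) * ((U ^ a : Aˣ) : A) = ((q ^ (-a) : Kˣ) : K) • (((U ^ a : Aˣ) : A) * (V : A)) := by
      have hone : ((q ^ (-a) : Kˣ) : K) * ((q ^ a : Kˣ) : K) = 1 := by
        rw [← Units.val_mul, ← zpow_add, neg_add_cancel, zpow_zero, Units.val_one]
      rw [h1 a, smul_smul, hone, one_smul]
    calc ((U ^ a : Aˣ) : A) * ((V⁻¹ : Aˣ) : A)
        = ((V⁻¹ : Aˣ) : A) * (((V : A) * ((U ^ a : Aˣ) : A)) * ((V⁻¹ : Aˣ) : A)) := by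
          rw [← mul_assoc, ← mul_assoc, Units.inv_mul, one_mul]
      _ = ((q ^ (-a) : Kˣ) : K) • (((V⁻¹ : Aˣ) : A) * ((U ^ a : Aˣ) : A)) := by
          rw [hrev, smul_mul_assoc, mul_smul_comm, mul_assoc, Units.mul_inv, mul_one]
  intro a b
  induction b using Int.induction_on with
  | zero => simp
  | succ i ih =>
      have hp1 : (V ^ ((i : ℤ) + 1) : Aˣ) = V ^ (i : ℤ) * V := by rw [zpow_add_one]
      have hq1 : (q ^ (a * ((i : ℤ) + 1)) : Kˣ) = q ^ (a * (i : ℤ)) * q ^ a := by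
        rw [← zpow_add, mul_add, mul_one]
      rw [hp1, hq1, Units.val_mul, Units.val_mul, ← mul_assoc, ih, smul_mul_assoc,
        mul_assoc, h1 a, mul_smul_comm, smul_smul, ← mul_assoc]
  | pred i ih =>
      have hp1 : (V ^ (-(i : ℤ) - 1) : Aˣ) = V ^ (-(i : ℤ)) * V⁻¹ := by rw [zpow_sub_one]
      have hq1 : (q ^ (a * (-(i : ℤ) - 1)) : Kˣ) = q ^ (a * (-(i : ℤ))) * q ^ (-a) := by
        rw [← zpow_add]; ring_nf
      rw [hp1, hq1, Units.val_mul, Units.val_mul, ← mul_assoc, ih, smul_mul_assoc,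
        mul_assoc, h1inv a, mul_smul_comm, smul_smul, ← mul_assoc]

theorem qt_key {K : Type*} [CommRing K] (q : Kˣ)
    {A : Type*} [Ring A] [Algebra K A] (U V : Aˣ)
    (hUV : (U : A) * (V : A) = (q : K) • ((V : A) * (U : A)))
    (p r a b : ℤ) :
    (((V ^ p : Aˣ) : A) * ((U ^ a : Aˣ) : A)) * (((V ^ r : Aˣ) : A) * ((U ^ b : Aˣ) : A))
      = ((q ^ (a * r) : Kˣ) : K) •
        (((V ^ (p + r) : Aˣ) : A) * ((U ^ (a + b) : Aˣ) : A)) := by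
  rw [mul_assoc, ← mul_assoc ((U ^ a : Aˣ) : A), qt_comm q U V hUV a r, smul_mul_assoc,
    mul_smul_comm, zpow_add, zpow_add, Units.val_mul, Units.val_mul]
  congr 1
  noncomm_ring


/-- In the quantum torus associative algebra generated by
invertible `U, V` with `U V = q V U` (where `U` plays the role of `q^L` and `V`
of `e^M`), the elements `E_{n,m} := Vⁿ(Uᵐ − U^{−m})` satisfy
`[E_{n,m}, E_{l,k}] = (q^{ml}−q^{nk}) V^{n+l}(U^{m+k} − U^{−(m+k)})`
`− (q^{ml}−q^{−nk}) V^{n+l}(U^{m−k} − U^{−(m−k)})`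
`+ (q^{ml}−q^{nk}+q^{−ml}−q^{−nk}) V^{n+l}(U^{−m−k} − U^{−m+k})`. -/
theorem quantum_torus_E_commutator
    (K : Type*) [CommRing K] (q : Kˣ)
    (A : Type*) [Ring A] [Algebra K A]
    (U V : Aˣ)
    (hUV : (U : A) * (V : A) = (q : K) • ((V : A) * (U : A)))
    (E : ℕ → ℕ → A)
    (hE : ∀ n m : ℕ,
      E n m = ((V ^ (n : ℤ) : Aˣ) : A) *
        (((U ^ (m : ℤ) : Aˣ) : A) - ((U ^ (-(m : ℤ)) : Aˣ) : A)))
    (n m l k : ℕ) :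
    E n m * E l k - E l k * E n m
      = (((q ^ ((m : ℤ) * l) : Kˣ) : K) - ((q ^ ((n : ℤ) * k) : Kˣ) : K)) •
          (((V ^ ((n : ℤ) + l) : Aˣ) : A) *
            (((U ^ ((m : ℤ) + k) : Aˣ) : A) - ((U ^ (-((m : ℤ) + k)) : Aˣ) : A)))
        - (((q ^ ((m : ℤ) * l) : Kˣ) : K) - ((q ^ (-((n : ℤ) * k)) : Kˣ) : K)) •
            (((V ^ ((n : ℤ) + l) : Aˣ) : A) *
              (((U ^ ((m : ℤ) - k) : Aˣ) : A) - ((U ^ (-((m : ℤ) - k)) : Aˣ) : A)))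
        + (((q ^ ((m : ℤ) * l) : Kˣ) : K) - ((q ^ ((n : ℤ) * k) : Kˣ) : K)
            + ((q ^ (-((m : ℤ) * l)) : Kˣ) : K) - ((q ^ (-((n : ℤ) * k)) : Kˣ) : K)) •
            (((V ^ ((n : ℤ) + l) : Aˣ) : A) *
              (((U ^ (-(m : ℤ) - k) : Aˣ) : A) - ((U ^ (-(m : ℤ) + k) : Aˣ) : A))) := by
  rw [hE n m, hE l k]
  simp only [mul_sub, sub_mul]
  rw [qt_key q U V hUV, qt_key q U V hUV, qt_key q U V hUV, qt_key q U V hUV,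
    qt_key q U V hUV, qt_key q U V hUV, qt_key q U V hUV, qt_key q U V hUV]
  simp only [show (l : ℤ) + n = n + l from by ring,
    show (k : ℤ) + m = (m : ℤ) + k from by ring,
    show (k : ℤ) + -m = -(m : ℤ) + k from by ring,
    show -(k : ℤ) + m = (m : ℤ) - k from by ring,
    show -(k : ℤ) + -m = -(m : ℤ) - k from by ring,
    show (m : ℤ) + -k = (m : ℤ) - k from by ring,
    show -(m : ℤ) + -k = -(m : ℤ) - k from by ring,
    show -((m : ℤ) + k) = -(m : ℤ) - k from by ring,
    show -((m : ℤ) - k) = -(m : ℤ) + k from by ring,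
    show -(m : ℤ) * l = -((m : ℤ) * l) from by ring,
    show (k : ℤ) * n = (n : ℤ) * k from by ring,
    show -(k : ℤ) * n = -((n : ℤ) * k) from by ring]
  module
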